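/- Let H be a complex Hilbert space and let F(H) denote the set of finite-rank bounded operators on H. Then F(H), regarded as a multiplicative semigroup, is a selfadjoint-ideal (SI) semigroup: every ideal J of the semigroup F(H) satisfies T ∈ J implies T* ∈ J. -/

import Mathlib

open ContinuousLinearMap
open scoped InnerProductSpace

variable {H : Type*} [NormedAddCommGroup H] [InnerProductSpace ℂ H] [CompleteSpace H]

/-- `J` is a (two-sided) semigroup-ideal of `S`. -/
def IsSemigroupIdeal {M : Type*} [Mul M] (S J : Set M) : Prop :=
  J ⊆ S ∧ ∀ T ∈ J, ∀ X ∈ S, X * T ∈ J ∧ T * X ∈ J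

/-- `S` is a selfadjoint-ideal (SI) semigroup: every semigroup-ideal of `S`
is closed under adjoints. -/
def IsSI (S : Set (H →L[ℂ] H)) : Prop :=
  ∀ J : Set (H →L[ℂ] H), IsSemigroupIdeal S J → ∀ T ∈ J, adjoint T ∈ J

set_option maxHeartbeats 2000000 in
/-- the semigroup `F(H)` of finite-rank operators is an SI semigroup:
every semigroup-ideal of `F(H)` is closed under adjoints. -/
theorem stmt3 :
    IsSI {T : H →L[ℂ] H | FiniteDimensional ℂ (LinearMap.range (T : H →ₗ[ℂ] H))} := by
  rintro J ⟨hJS, hJ⟩ T hTJ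
  have h : FiniteDimensional ℂ (LinearMap.range (T : H →ₗ[ℂ] H)) := hJS hTJ
  set W : Submodule ℂ H := LinearMap.range (T : H →ₗ[ℂ] H) with hW
  haveI : FiniteDimensional ℂ W := h
  haveI : CompleteSpace W := FiniteDimensional.complete ℂ W
  set P := Submodule.orthogonalProjectionOnto W with hP
  -- adjoint of T kills Wᗮ
  have hker : ∀ v ∈ Wᗮ, adjoint T v = 0 := by
    intro v hv
    have h0 : ⟪adjoint T v, adjoint T v⟫_ℂ = 0 := by
      rw [adjoint_inner_left]
      have := (Submodule.mem_orthogonal W v).mp hv _ (LinearMap.mem_range_self (T : H →ₗ[ℂ] H) (adjoint T v))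
      simpa using congrArg (starRingEnd ℂ) this
    exact inner_self_eq_zero.mp h0
  have hTP : ∀ x : H, adjoint T ((P x : H)) = adjoint T x := by
    intro x
    have := hker _ (Submodule.sub_starProjection_mem_orthogonal (K := W) x)
    rw [map_sub, sub_eq_zero] at this
    exact this.symm
  -- adjoint T has finite rank
  have hrange : LinearMap.range ((adjoint T : H →L[ℂ] H) : H →ₗ[ℂ] H) = Submodule.map (adjoint T).toLinearMap W := by
    apply le_antisymm
    · rintro y ⟨x, rfl⟩
      exact ⟨(P x : H), (P x).2, hTP x⟩
    · rintro y ⟨x, _, rfl⟩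
      exact LinearMap.mem_range_self _ x
  have hadjS : adjoint T ∈ {T : H →L[ℂ] H | FiniteDimensional ℂ (LinearMap.range (T : H →ₗ[ℂ] H))} := by
    show FiniteDimensional ℂ (LinearMap.range ((adjoint T : H →L[ℂ] H) : H →ₗ[ℂ] H))
    rw [hrange]
    exact Module.Finite.map W (adjoint T).toLinearMap
  -- the restriction of T T* to W, as a linear equiv
  have hmem : ∀ w : W, T (adjoint T w) ∈ W := fun w => LinearMap.mem_range_self (T : H →ₗ[ℂ] H) _
  set f : W →ₗ[ℂ] W :=
    { toFun := fun w => ⟨T (adjoint T w), hmem w⟩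
      map_add' := by intro a b; ext; simp
      map_smul' := by intro c a; ext; simp } with hf
  have hfinj : Function.Injective f := by
    rw [← LinearMap.ker_eq_bot, LinearMap.ker_eq_bot']
    intro w hw
    have h1 : T (adjoint T (w : H)) = 0 := congrArg Subtype.val hw
    have h2 : ⟪adjoint T (w : H), adjoint T (w : H)⟫_ℂ = 0 := by
      rw [adjoint_inner_left, h1, inner_zero_right]
    have h3 : adjoint T (w : H) = 0 := inner_self_eq_zero.mp h2
    have h4 : (w : H) ∈ Wᗮ := by
      intro u hu
      obtain ⟨x, rfl⟩ := hu
      have : ⟪adjoint T (w : H), x⟫_ℂ = 0 := by rw [h3, inner_zero_left]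
      rw [adjoint_inner_left] at this
      simpa using congrArg (starRingEnd ℂ) this
    have := (Submodule.mem_orthogonal W (w : H)).mp h4 (w : H) w.2
    exact Subtype.ext (inner_self_eq_zero.mp this)
  have hfsurj : Function.Surjective f := (LinearMap.injective_iff_surjective).mp hfinj
  set e : W ≃ₗ[ℂ] W := LinearEquiv.ofBijective f ⟨hfinj, hfsurj⟩ with he
  set G : H →L[ℂ] H :=
    W.subtypeL ∘L (LinearMap.toContinuousLinearMap (e.symm : W →ₗ[ℂ] W)) ∘L P with hG
  set X₁ : H →L[ℂ] H := adjoint T ∘L G with hX₁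
  have hX₁S : X₁ ∈ {T : H →L[ℂ] H | FiniteDimensional ℂ (LinearMap.range (T : H →ₗ[ℂ] H))} := by
    show FiniteDimensional ℂ (LinearMap.range (X₁ : H →ₗ[ℂ] H))
    have hle : LinearMap.range (X₁ : H →ₗ[ℂ] H) ≤ LinearMap.range ((adjoint T : H →L[ℂ] H) : H →ₗ[ℂ] H) := by
      rintro y ⟨x, rfl⟩
      exact LinearMap.mem_range_self _ _
    haveI : FiniteDimensional ℂ (LinearMap.range ((adjoint T : H →L[ℂ] H) : H →ₗ[ℂ] H)) := hadjS
    exact Submodule.finiteDimensional_of_le hle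
  -- key identity : X₁ * T * adjoint T = adjoint T
  have key : X₁ * T * adjoint T = adjoint T := by
    ext x
    show adjoint T (G (T (adjoint T x))) = adjoint T x
    have hmemx : T (adjoint T x) ∈ W := LinearMap.mem_range_self (T : H →ₗ[ℂ] H) _
    have hPx : P (T (adjoint T x)) = ⟨T (adjoint T x), hmemx⟩ :=
      Submodule.orthogonalProjectionOnto_mem_subspace_eq_self (⟨T (adjoint T x), hmemx⟩ : W)
    have hfeq : f (P x) = ⟨T (adjoint T x), hmemx⟩ := by
      apply Subtype.ext
      show T (adjoint T ((P x : H))) = T (adjoint T x)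
      rw [hTP x]
    have hsymm : e.symm ⟨T (adjoint T x), hmemx⟩ = P x := by
      rw [← hfeq]
      exact e.symm_apply_apply (P x)
    show adjoint T ((W.subtypeL ∘L (LinearMap.toContinuousLinearMap (e.symm : W →ₗ[ℂ] W)) ∘L P)
      (T (adjoint T x))) = adjoint T x
    simp only [ContinuousLinearMap.comp_apply]
    rw [hPx]
    have : (LinearMap.toContinuousLinearMap (e.symm : W →ₗ[ℂ] W)) ⟨T (adjoint T x), hmemx⟩
        = P x := hsymm
    rw [this]
    exact hTP x
  have step1 : X₁ * T ∈ J := (hJ T hTJ X₁ hX₁S).1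
  have step2 : (X₁ * T) * adjoint T ∈ J := (hJ _ step1 (adjoint T) hadjS).2
  rwa [key] at step2
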